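/- Let k be an even natural number and let T'_k : B^k × B^(2^k) × B^k → Bool be defined by T'_k(x,y,z) = y(x ⊕ z), where ⊕ denotes bitwise XOR and y ∈ B^(2^k) is viewed as a function B^k → Bool. Then the decomposition complexity of T'_k is at least 2^(k/2); i.e., any a : B^k × B^(2^k) → B^u, b : B^(2^k) × B^k → B^v, t : B^u × B^v → Bool with T'_k(x,y,z) = t(a(x,y), b(y,z)) for all inputs satisfy u + v ≥ 2^(k/2). -/

import Mathlib

/-- `BS k` is the set of binary strings of length `k`. -/
abbrev BS (k : ℕ) := Fin k → Bool

/-- The decomposition complexity of `T : B^p × B^q × B^r → M` is at most `n`. -/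
def DecompBound {p q r : ℕ} {M : Type*} (T : BS p → BS q → BS r → M) (n : ℕ) : Prop :=
  ∃ u v : ℕ, u + v ≤ n ∧
    ∃ (a : BS p → BS q → BS u) (b : BS q → BS r → BS v) (t : BS u → BS v → M),
      ∀ x y z, T x y z = t (a x y) (b y z)

/-- Left-half embedding: put `s` on the first `m` coordinates, zero elsewhere. -/
def xorLB (m : ℕ) (s : BS m) : BS (m + m) := fun i =>
  if hi : (i : ℕ) < m then s ⟨i, hi⟩ else false

/-- Right-half embedding: put `s` on the last `m` coordinates, zero elsewhere. -/
def xorRB (m : ℕ) (s : BS m) : BS (m + m) := fun i =>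
  if hi : (i : ℕ) < m then false else s ⟨(i : ℕ) - m, by omega⟩

/-- Combine two half-strings into a full string. -/
def xorGB (m : ℕ) (s s' : BS m) : BS (m + m) := fun i =>
  if hi : (i : ℕ) < m then s ⟨i, hi⟩ else s' ⟨(i : ℕ) - m, by omega⟩

lemma xorGB_xor (m : ℕ) (s s' : BS m) :
    (fun i => xor (xorLB m s i) (xorRB m s' i)) = xorGB m s s' := by
  funext i
  simp only [xorLB, xorRB, xorGB]
  by_cases hi : (i : ℕ) < m <;> simp [hi]

lemma xorGB_surj (m : ℕ) (w : BS (m + m)) : ∃ s s', xorGB m s s' = w := by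
  refine ⟨fun j => w ⟨j, by omega⟩, fun j => w ⟨m + j, by omega⟩, ?_⟩
  funext i
  simp only [xorGB]
  by_cases hi : (i : ℕ) < m
  · simp [hi]
  · simp only [hi, dif_neg, not_false_iff]
    congr 1
    exact Fin.ext (by simp; omega)

/-- For even `k`, the predicate `T'(x,y,z) = y(x ⊕ z)` has decomposition complexity
at least `2^(k/2)`: any decomposition `y(x ⊕ z) = t(a(x,y), b(y,z))` satisfies
`u + v ≥ 2^(k/2)`. -/
theorem xor_indexing_lower_bound (k : ℕ) (hk : Even k) (e : BS k ≃ Fin (2 ^ k))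
    (u v : ℕ) (a : BS k → BS (2 ^ k) → BS u) (b : BS (2 ^ k) → BS k → BS v)
    (t : BS u → BS v → Bool)
    (h : ∀ (x : BS k) (y : BS (2 ^ k)) (z : BS k),
      y (e (fun i => xor (x i) (z i))) = t (a x y) (b y z)) :
    2 ^ (k / 2) ≤ u + v := by
  obtain ⟨m, rfl⟩ := hk
  have hm : (m + m) / 2 = m := by omega
  rw [hm]
  set Φ : BS (2 ^ (m + m)) → (BS m → BS u) × (BS m → BS v) :=
    fun y => (fun s => a (xorLB m s) y, fun s' => b y (xorRB m s')) with hΦdef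
  have hΦ : Function.Injective Φ := by
    intro y y' hyy
    have h1 : ∀ s s', y (e (xorGB m s s')) = y' (e (xorGB m s s')) := by
      intro s s'
      have e1 := h (xorLB m s) y (xorRB m s')
      have e2 := h (xorLB m s) y' (xorRB m s')
      rw [xorGB_xor] at e1 e2
      rw [e1, e2]
      have ha : a (xorLB m s) y = a (xorLB m s) y' :=
        congrFun (congrArg Prod.fst hyy) s
      have hb : b y (xorRB m s') = b y' (xorRB m s') :=
        congrFun (congrArg Prod.snd hyy) s'
      rw [ha, hb]
    funext j
    obtain ⟨s, s', hs⟩ := xorGB_surj m (e.symm j)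
    have := h1 s s'
    rwa [hs, e.apply_symm_apply] at this
  have hcard := Fintype.card_le_of_injective Φ hΦ
  have c1 : Fintype.card (BS (2 ^ (m + m))) = 2 ^ 2 ^ (m + m) := by
    simp [Fintype.card_fun]
  have c2 : Fintype.card ((BS m → BS u) × (BS m → BS v)) = 2 ^ ((u + v) * 2 ^ m) := by
    rw [Fintype.card_prod, Fintype.card_fun, Fintype.card_fun]
    simp [Fintype.card_fun, ← pow_mul, ← pow_add, add_mul]
  rw [c1, c2] at hcard
  have h2 : 2 ^ (m + m) ≤ (u + v) * 2 ^ m :=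
    (Nat.pow_le_pow_iff_right one_lt_two).mp hcard
  rw [pow_add] at h2
  exact Nat.le_of_mul_le_mul_right h2 (Nat.pow_pos two_pos)
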